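/- In the setting of the previous transformation, if |V(P)| ≥ |V(Q)| then W(T_w) − W(T) = |V(M)|·(|V(P)| − |V(Q)| + 1) > 0, where T_w is obtained by moving all neighbors v_1,...,v_t of v in M to be neighbors of w. -/

import Mathlib

open SimpleGraph Finset

/-- The Wiener index: sum of distances over unordered pairs (as a rational). -/
noncomputable def wiener {V : Type*} [Fintype V] (G : SimpleGraph V) : ℚ :=
  (∑ u : V, ∑ v : V, (G.dist u v : ℚ)) / 2

/-- The average distance `μ(G) = W(G) / C(n,2)`. -/
noncomputable def avgDist {V : Type*} [Fintype V] (G : SimpleGraph V) : ℚ :=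
  wiener G / ((Fintype.card V).choose 2 : ℚ)

/-- `a` is the independence number of `G`. -/
def IsIndepNum {V : Type*} (G : SimpleGraph V) (a : ℕ) : Prop :=
  IsGreatest {m | ∃ s : Finset V, s.card = m ∧ ∀ x ∈ s, ∀ y ∈ s, ¬ G.Adj x y} a

/-- The tree `H_{a,b}`: a path on `a` vertices with `⌊b/2⌋` pendent vertices attached to
one end and `⌈b/2⌉` pendent vertices attached to the other end. -/
def Hab (a b : ℕ) : SimpleGraph (Fin (a + b)) :=
  SimpleGraph.fromRel (fun i j =>
    ((i : ℕ) + 1 = (j : ℕ) ∧ (j : ℕ) < a) ∨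
    (a ≤ (i : ℕ) ∧ (i : ℕ) < a + b / 2 ∧ (j : ℕ) = 0) ∨
    (a + b / 2 ≤ (i : ℕ) ∧ (j : ℕ) = a - 1))

namespace StmtAux

variable {V : Type*} {G : SimpleGraph V}

/-- If every edge of `G` leaving `A` goes to `z`, a walk starting in `A` avoiding `z`
stays in `A`. -/
lemma stay {A : Set V} {z : V}
    (hcross : ∀ a b, a ∈ A → b ∉ A → G.Adj a b → b = z) :
    ∀ {x y : V} (p : G.Walk x y), x ∈ A → z ∉ p.support → ∀ c ∈ p.support, c ∈ A := by
  intro x y p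
  induction p with
  | nil => intro hx _ c hc; simp at hc; subst hc; exact hx
  | @cons a b y h q ih =>
    intro hx hz c hc
    have hzq : z ∉ q.support := fun hzq => hz (by simp [hzq])
    have hb : b ∈ A := by
      by_contra hb
      exact hzq (hcross a b hx hb h ▸ q.start_mem_support)
    rcases (by simpa using hc : c = a ∨ c ∈ q.support) with rfl | hc
    · exact hx
    · exact ih hb hzq c hc

lemma cross_mem_support {A : Set V} {z : V}
    (hcross : ∀ a b, a ∈ A → b ∉ A → G.Adj a b → b = z) {x y : V}
    (p : G.Walk x y) (hx : x ∈ A) (hy : y ∉ A) : z ∈ p.support := by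
  by_contra hz
  exact hy (stay hcross p hx hz y p.end_mem_support)

lemma isolated_not_mem_support {z : V} (hz : ∀ y, ¬ G.Adj z y) :
    ∀ {x y : V} (p : G.Walk x y), x ≠ z → z ∉ p.support := by
  intro x y p
  induction p with
  | nil => intro hx; simpa using fun h => hx h.symm
  | @cons a b y h q ih =>
    intro hx hm
    rcases (by simpa using hm : z = a ∨ z ∈ q.support) with rfl | hm
    · exact hx rfl
    · exact ih (fun hb => hz a (hb ▸ h.symm)) hm

lemma not_mem_edge_of_not_mem_support {z x y : V} {p : G.Walk x y}
    (hz : z ∉ p.support) {e : Sym2 V} (he : e ∈ p.edges) : z ∉ e := by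
  induction e with
  | _ a b =>
    intro hmem
    rcases Sym2.mem_iff.1 hmem with rfl | rfl
    · exact hz (p.fst_mem_support_of_mem_edges he)
    · exact hz (p.snd_mem_support_of_mem_edges he)

lemma dist_split [DecidableEq V] (hconn : G.Connected) {x y z : V}
    (h : ∀ p : G.Walk x y, z ∈ p.support) :
    G.dist x y = G.dist x z + G.dist z y := by
  refine le_antisymm hconn.dist_triangle ?_
  obtain ⟨p, hp⟩ := hconn.exists_walk_length_eq_dist x y
  have hzp := h p
  calc G.dist x z + G.dist z y ≤ (p.takeUntil z hzp).length + (p.dropUntil z hzp).length :=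
        add_le_add (SimpleGraph.dist_le _) (SimpleGraph.dist_le _)
    _ = p.length := by
        conv_rhs => rw [← p.take_spec hzp]
        rw [SimpleGraph.Walk.length_append]
    _ = G.dist x y := hp

/-- In a path, a vertex distinct from a middle vertex cannot appear both in the part up to
the middle vertex and in the part after it. -/
lemma double_cross [DecidableEq V] {x y m z : V} {p : G.Walk x y} (hp : p.IsPath)
    (hm : m ∈ p.support)
    (hzm : z ≠ m) (h1 : z ∈ (p.takeUntil m hm).support)
    (h2 : z ∈ (p.dropUntil m hm).support) : False := by
  have hsp : p.support = (p.takeUntil m hm).support ++ (p.dropUntil m hm).support.tail := by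
    conv_lhs => rw [← p.take_spec hm]
    rw [SimpleGraph.Walk.support_append]
  have hnd := hp.support_nodup
  rw [hsp, List.nodup_append] at hnd
  have h2' : z ∈ (p.dropUntil m hm).support.tail := by
    rw [(p.dropUntil m hm).support_eq_cons, List.mem_cons] at h2
    exact h2.resolve_left hzm
  exact hnd.2.2 _ h1 _ h2' rfl

end StmtAux

/-- if `|V(P)| ≥ |V(Q)|` then
`W(T_w) - W(T) = |V(M)| (|V(P)| - |V(Q)| + 1) > 0`. -/
theorem stmt1 {V : Type*} [Fintype V] (T : SimpleGraph V) (hT : T.IsTree)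
    (v u w : V) (t : ℕ) (ht : 1 ≤ t) (vs : Fin t → V) (hinj : Function.Injective vs)
    (hu : T.Adj v u) (hw : T.Adj v w) (huw : u ≠ w)
    (hvs : ∀ i, T.Adj v (vs i)) (hvsu : ∀ i, vs i ≠ u) (hvsw : ∀ i, vs i ≠ w)
    (hnb : ∀ x, T.Adj v x → x = u ∨ x = w ∨ ∃ i, vs i = x)
    -- the components of `T - v`
    (P Q M : Set V)
    (hP : P = {x | (T.deleteEdges {e | v ∈ e}).Reachable u x})
    (hQ : Q = {x | (T.deleteEdges {e | v ∈ e}).Reachable w x})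
    (hM : M = {x | ∃ i, (T.deleteEdges {e | v ∈ e}).Reachable (vs i) x})
    (hPQ : Q.ncard ≤ P.ncard) :
    wiener ((T.deleteEdges {e | ∃ i, e = s(v, vs i)}) ⊔
        SimpleGraph.fromEdgeSet {e | ∃ i, e = s(w, vs i)}) - wiener T
      = (M.ncard : ℚ) * ((P.ncard : ℚ) - (Q.ncard : ℚ) + 1) ∧
    0 < (M.ncard : ℚ) * ((P.ncard : ℚ) - (Q.ncard : ℚ) + 1) := by
  classical
  set D := T.deleteEdges {e | v ∈ e} with hDdef
  set Tw := (T.deleteEdges {e | ∃ i, e = s(v, vs i)}) ⊔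
      SimpleGraph.fromEdgeSet {e | ∃ i, e = s(w, vs i)} with hTwdef
  have hTconn : T.Connected := hT.isConnected
  have hDleT : D ≤ T := SimpleGraph.deleteEdges_le _
  have hDadj : ∀ x y : V, D.Adj x y ↔ T.Adj x y ∧ x ≠ v ∧ y ≠ v := by
    intro x y
    rw [hDdef]
    simp only [SimpleGraph.deleteEdges_adj, Set.mem_setOf_eq, Sym2.mem_iff, not_or]
    constructor
    · rintro ⟨h1, h2, h3⟩; exact ⟨h1, fun h => h2 h.symm, fun h => h3 h.symm⟩
    · rintro ⟨h1, h2, h3⟩; exact ⟨h1, fun h => h2 h.symm, fun h => h3 h.symm⟩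
  have hisol : ∀ x, ¬ D.Adj v x := fun x h => ((hDadj v x).mp h).2.1 rfl
  have hreach_v : ∀ x, D.Reachable v x → v = x := by
    intro x h
    obtain ⟨p⟩ := h
    cases p with
    | nil => rfl
    | cons h q => exact absurd h (hisol _)
  have hedgeD_of_T : ∀ {a b : V} (q : T.Walk a b), v ∉ q.support →
      ∀ e ∈ q.edges, e ∈ D.edgeSet := by
    intro a b q hv e he
    rw [hDdef, SimpleGraph.edgeSet_deleteEdges]
    exact ⟨q.edges_subset_edgeSet he, StmtAux.not_mem_edge_of_not_mem_support hv he⟩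
  have hsepn : ∀ a b : V, T.Adj v a → T.Adj v b → a ≠ b → ¬ D.Reachable a b := by
    intro a b ha hb hab hr
    obtain ⟨p0⟩ := hr
    have hvp1 : v ∉ p0.toPath.1.support :=
      StmtAux.isolated_not_mem_support hisol p0.toPath.1 ha.ne'
    obtain ⟨pu, hpu, hpuU⟩ := hT.existsUnique_path a b
    have hedges : ∀ e ∈ (p0.toPath.1).edges, e ∈ T.edgeSet :=
      fun e he => SimpleGraph.edgeSet_mono hDleT ((p0.toPath.1).edges_subset_edgeSet he)
    have h1 : (p0.toPath.1.transfer T hedges).IsPath :=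
      p0.toPath.2.transfer _
    have h2 : (SimpleGraph.Walk.cons ha.symm (SimpleGraph.Walk.cons hb SimpleGraph.Walk.nil) :
        T.Walk a b).IsPath := by
      simp [SimpleGraph.Walk.isPath_def, ha.ne', hab, hb.ne]
    have heq := (hpuU _ h1).trans (hpuU _ h2).symm
    apply hvp1
    have hv2 : v ∈ (p0.toPath.1.transfer T hedges).support := by rw [heq]; simp
    rwa [SimpleGraph.Walk.support_transfer] at hv2
  have hgate : ∀ {a b x : V}, T.Adj v a → T.Adj v b → D.Reachable a x → D.Reachable b x → a = b := by
    intro a b x ha hb hax hbx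
    by_contra hab
    exact hsepn a b ha hb hab (hax.trans hbx.symm)
  have hPmem : ∀ x, x ∈ P ↔ D.Reachable u x := fun x => by rw [hP]; exact Iff.rfl
  have hQmem : ∀ x, x ∈ Q ↔ D.Reachable w x := fun x => by rw [hQ]; exact Iff.rfl
  have hMmem : ∀ x, x ∈ M ↔ ∃ i, D.Reachable (vs i) x := fun x => by rw [hM]; exact Iff.rfl
  have huP : u ∈ P := (hPmem u).mpr (SimpleGraph.Reachable.refl u)
  have hwQ : w ∈ Q := (hQmem w).mpr (SimpleGraph.Reachable.refl w)
  have hvsM : ∀ i, vs i ∈ M := fun i => (hMmem _).mpr ⟨i, SimpleGraph.Reachable.refl _⟩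
  have hvP : v ∉ P := fun h => hu.ne (hreach_v u ((hPmem v).mp h).symm)
  have hvQ : v ∉ Q := fun h => hw.ne (hreach_v w ((hQmem v).mp h).symm)
  have hvM : v ∉ M := by
    intro h
    obtain ⟨i, hi⟩ := (hMmem v).mp h
    exact (hvs i).ne (hreach_v (vs i) hi.symm)
  have hPM : ∀ x, x ∈ P → x ∉ M := by
    intro x hxP hxM
    obtain ⟨i, hi⟩ := (hMmem x).mp hxM
    exact hsepn u (vs i) hu (hvs i) (Ne.symm (hvsu i)) (((hPmem x).mp hxP).trans hi.symm)
  have hQM : ∀ x, x ∈ Q → x ∉ M := by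
    intro x hxQ hxM
    obtain ⟨i, hi⟩ := (hMmem x).mp hxM
    exact hsepn w (vs i) hw (hvs i) (Ne.symm (hvsw i)) (((hQmem x).mp hxQ).trans hi.symm)
  have hPQ' : ∀ x, x ∈ P → x ∉ Q := by
    intro x hxP hxQ
    exact hsepn u w hu hw huw (((hPmem x).mp hxP).trans ((hQmem x).mp hxQ).symm)
  have hMcl : ∀ {x y}, x ∈ M → D.Reachable x y → y ∈ M := by
    intro x y hx hr
    obtain ⟨i, hi⟩ := (hMmem x).mp hx
    exact (hMmem y).mpr ⟨i, hi.trans hr⟩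
  have huM : u ∉ M := hPM u huP
  have hwM : w ∉ M := hQM w hwQ
  have hpart : ∀ x : V, x = v ∨ x ∈ P ∨ x ∈ Q ∨ x ∈ M := by
    intro x
    by_cases hx : x = v
    · exact Or.inl hx
    right
    obtain ⟨p⟩ := hTconn.preconnected v x
    obtain ⟨pp, hpp⟩ := p.toPath
    obtain ⟨n, hvn, q, rfl⟩ := SimpleGraph.Walk.exists_eq_cons_of_ne (fun h => hx h.symm) pp
    rw [SimpleGraph.Walk.cons_isPath_iff] at hpp
    have hreach : D.Reachable n x := ⟨q.transfer D (hedgeD_of_T q hpp.2)⟩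
    rcases hnb n hvn with rfl | rfl | ⟨i, rfl⟩
    · exact Or.inl ((hPmem x).mpr hreach)
    · exact Or.inr (Or.inl ((hQmem x).mpr hreach))
    · exact Or.inr (Or.inr ((hMmem x).mpr ⟨i, hreach⟩))
  have hcrossT : ∀ a b : V, a ∈ M → b ∉ M → T.Adj a b → b = v := by
    intro a b haM hbM hab
    by_contra hbv
    have hav : a ≠ v := fun h => hvM (h ▸ haM)
    exact hbM (hMcl haM ⟨SimpleGraph.Walk.cons ((hDadj a b).mpr ⟨hab, hav, hbv⟩) SimpleGraph.Walk.nil⟩)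
  have hTwadj : ∀ x y : V, Tw.Adj x y ↔
      (T.Adj x y ∧ ¬ ∃ i, s(x, y) = s(v, vs i)) ∨ ((∃ i, s(x, y) = s(w, vs i)) ∧ x ≠ y) := by
    intro x y
    rw [hTwdef]
    simp only [SimpleGraph.sup_adj, SimpleGraph.deleteEdges_adj, SimpleGraph.fromEdgeSet_adj,
      Set.mem_setOf_eq]
  have hTwTnM : ∀ {x y}, T.Adj x y → x ∉ M → y ∉ M → Tw.Adj x y := by
    intro x y h hx hy
    refine (hTwadj x y).mpr (Or.inl ⟨h, ?_⟩)
    rintro ⟨i, hi⟩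
    rw [Sym2.eq_iff] at hi
    rcases hi with ⟨_, hy'⟩ | ⟨hx', _⟩
    · exact hy (hy' ▸ hvsM i)
    · exact hx (hx' ▸ hvsM i)
  have hTwTM : ∀ {x y}, T.Adj x y → x ∈ M → y ∈ M → Tw.Adj x y := by
    intro x y h hx hy
    refine (hTwadj x y).mpr (Or.inl ⟨h, ?_⟩)
    rintro ⟨i, hi⟩
    rw [Sym2.eq_iff] at hi
    rcases hi with ⟨hx', _⟩ | ⟨_, hy'⟩
    · exact hvM (hx' ▸ hx)
    · exact hvM (hy' ▸ hy)
  have hTTwnM : ∀ {x y}, Tw.Adj x y → x ∉ M → y ∉ M → T.Adj x y := by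
    intro x y h hx hy
    rcases (hTwadj x y).mp h with ⟨h1, _⟩ | ⟨⟨i, hi⟩, _⟩
    · exact h1
    · rw [Sym2.eq_iff] at hi
      rcases hi with ⟨_, hy'⟩ | ⟨hx', _⟩
      · exact absurd (hy' ▸ hvsM i) hy
      · exact absurd (hx' ▸ hvsM i) hx
  have hTTwM : ∀ {x y}, Tw.Adj x y → x ∈ M → y ∈ M → D.Adj x y := by
    intro x y h hx hy
    rcases (hTwadj x y).mp h with ⟨h1, _⟩ | ⟨⟨i, hi⟩, _⟩
    · exact (hDadj x y).mpr ⟨h1, fun h' => hvM (h' ▸ hx), fun h' => hvM (h' ▸ hy)⟩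
    · rw [Sym2.eq_iff] at hi
      rcases hi with ⟨hx', _⟩ | ⟨_, hy'⟩
      · exact absurd (hx' ▸ hx) hwM
      · exact absurd (hy' ▸ hy) hwM
  have hcrossTw : ∀ a b : V, a ∈ M → b ∉ M → Tw.Adj a b → b = w := by
    intro a b haM hbM h
    rcases (hTwadj a b).mp h with ⟨h1, h2⟩ | ⟨⟨i, hi⟩, _⟩
    · have hbv : b = v := hcrossT a b haM hbM h1
      subst hbv
      rcases hnb a h1.symm with rfl | rfl | ⟨i, rfl⟩
      · exact absurd haM huM
      · exact absurd haM hwM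
      · exact absurd ⟨i, Sym2.eq_swap⟩ h2
    · rw [Sym2.eq_iff] at hi
      rcases hi with ⟨_, hb'⟩ | ⟨_, hb'⟩
      · exact absurd (hb' ▸ hvsM i) hbM
      · exact hb'
  have hDleTw : D ≤ Tw := by
    rw [hDdef, hTwdef]
    refine le_trans (SimpleGraph.deleteEdges_anti ?_) le_sup_left
    rintro e ⟨i, rfl⟩
    simp
  have hreachTw : ∀ x, Tw.Reachable w x := by
    intro x
    have hadjwv : Tw.Adj w v := hTwTnM hw.symm hwM hvM
    rcases hpart x with rfl | hx | hx | hx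
    · exact hadjwv.reachable
    · exact (hadjwv.reachable.trans (hTwTnM hu hvM huM).reachable).trans
        (((hPmem x).mp hx).mono hDleTw)
    · exact ((hQmem x).mp hx).mono hDleTw
    · obtain ⟨i, hi⟩ := (hMmem x).mp hx
      exact ((hTwadj w (vs i)).mpr (Or.inr ⟨⟨i, rfl⟩, fun h => hvsw i h.symm⟩)).reachable.trans
        (hi.mono hDleTw)
  have hTwconn : Tw.Connected :=
    (SimpleGraph.connected_iff_exists_forall_reachable Tw).mpr ⟨w, hreachTw⟩
  have hedgeTw_of_T_avoidv : ∀ {a b : V} (q : T.Walk a b), v ∉ q.support →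
      ∀ e ∈ q.edges, e ∈ Tw.edgeSet := by
    intro a b q hv e he
    have h1 : e ∈ D.edgeSet := hedgeD_of_T q hv e he
    exact SimpleGraph.edgeSet_mono hDleTw h1
  have hedgeTw_of_T_nM : ∀ {a b : V} (q : T.Walk a b), (∀ c ∈ q.support, c ∉ M) →
      ∀ e ∈ q.edges, e ∈ Tw.edgeSet := by
    intro a b q hs e
    induction e with
    | _ c d =>
      intro he
      rw [SimpleGraph.mem_edgeSet]
      exact hTwTnM (q.adj_of_mem_edges he) (hs c (q.fst_mem_support_of_mem_edges he))
        (hs d (q.snd_mem_support_of_mem_edges he))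
  have hedgeT_of_Tw_nM : ∀ {a b : V} (q : Tw.Walk a b), (∀ c ∈ q.support, c ∉ M) →
      ∀ e ∈ q.edges, e ∈ T.edgeSet := by
    intro a b q hs e
    induction e with
    | _ c d =>
      intro he
      rw [SimpleGraph.mem_edgeSet]
      exact hTTwnM (q.adj_of_mem_edges he) (hs c (q.fst_mem_support_of_mem_edges he))
        (hs d (q.snd_mem_support_of_mem_edges he))
  have hedgeD_of_Tw_M : ∀ {a b : V} (q : Tw.Walk a b), (∀ c ∈ q.support, c ∈ M) →
      ∀ e ∈ q.edges, e ∈ D.edgeSet := by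
    intro a b q hs e
    induction e with
    | _ c d =>
      intro he
      rw [SimpleGraph.mem_edgeSet]
      exact hTTwM (q.adj_of_mem_edges he) (hs c (q.fst_mem_support_of_mem_edges he))
        (hs d (q.snd_mem_support_of_mem_edges he))
  have hdistvx : ∀ (n x : V), T.Adj v n → D.Reachable n x → T.dist v x = 1 + T.dist n x := by
    intro n x hn hr
    have hxv : x ≠ v := by
      rintro rfl
      exact hn.ne (hreach_v n hr.symm)
    refine le_antisymm ?_ ?_
    · calc T.dist v x ≤ T.dist v n + T.dist n x := hTconn.dist_triangle
        _ = 1 + T.dist n x := by rw [SimpleGraph.dist_eq_one_iff_adj.mpr hn]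
    · obtain ⟨p, hp⟩ := hTconn.exists_walk_length_eq_dist v x
      have hpath := p.isPath_of_length_eq_dist hp
      obtain ⟨n', hn', q, rfl⟩ := SimpleGraph.Walk.exists_eq_cons_of_ne (Ne.symm hxv) p
      rw [SimpleGraph.Walk.cons_isPath_iff] at hpath
      have hrq : D.Reachable n' x := ⟨q.transfer D (hedgeD_of_T q hpath.2)⟩
      have hnn : n' = n := hgate hn' hn hrq hr
      subst hnn
      rw [← hp, SimpleGraph.Walk.length_cons]
      have := SimpleGraph.dist_le q
      omega
  have hsepT : ∀ x y : V, x ≠ v → y ≠ v → ¬ D.Reachable x y →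
      T.dist x y = T.dist x v + T.dist v y := by
    intro x y hx hy hr
    refine StmtAux.dist_split hTconn ?_
    intro p
    by_contra hvp
    exact hr ⟨p.transfer D (hedgeD_of_T p hvp)⟩
  have hstayTw : ∀ {x y : V} (p : Tw.Walk x y), x ∈ M → w ∉ p.support →
      ∀ c ∈ p.support, c ∈ M := fun p => StmtAux.stay hcrossTw p
  have hTwadj_wM : ∀ a, Tw.Adj w a → a ∈ M → ∃ j, a = vs j := by
    intro a h haM
    rcases (hTwadj w a).mp h with ⟨h1, _⟩ | ⟨⟨j, hj⟩, _⟩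
    · exact absurd (hcrossT a w haM hwM h1.symm) hw.ne'
    · rw [Sym2.eq_iff] at hj
      rcases hj with ⟨_, hb⟩ | ⟨_, hb⟩
      · exact ⟨j, hb⟩
      · exact absurd (hb ▸ haM) hwM
  have hdistw : ∀ (i : Fin t) (x : V), D.Reachable (vs i) x →
      Tw.dist w x = 1 + Tw.dist (vs i) x := by
    intro i x hr
    have hxM : x ∈ M := hMcl (hvsM i) hr
    have hxw : x ≠ w := fun h => hwM (h ▸ hxM)
    have hadjwvi : Tw.Adj w (vs i) :=
      (hTwadj w (vs i)).mpr (Or.inr ⟨⟨i, rfl⟩, fun h => hvsw i h.symm⟩)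
    refine le_antisymm ?_ ?_
    · calc Tw.dist w x ≤ Tw.dist w (vs i) + Tw.dist (vs i) x := hTwconn.dist_triangle
        _ = 1 + Tw.dist (vs i) x := by rw [SimpleGraph.dist_eq_one_iff_adj.mpr hadjwvi]
    · obtain ⟨p, hp⟩ := hTwconn.exists_walk_length_eq_dist w x
      have hpath := p.isPath_of_length_eq_dist hp
      obtain ⟨a, hwa, q, rfl⟩ := SimpleGraph.Walk.exists_eq_cons_of_ne (Ne.symm hxw) p
      rw [SimpleGraph.Walk.cons_isPath_iff] at hpath
      have haM : a ∈ M := hstayTw q.reverse hxM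
        (by rw [SimpleGraph.Walk.support_reverse, List.mem_reverse]; exact hpath.2) a
        (SimpleGraph.Walk.end_mem_support _)
      obtain ⟨j, rfl⟩ := hTwadj_wM a hwa haM
      have hsupM : ∀ c ∈ q.support, c ∈ M := hstayTw q haM hpath.2
      have hrq : D.Reachable (vs j) x := ⟨q.transfer D (hedgeD_of_Tw_M q hsupM)⟩
      have hji : vs j = vs i := hgate (hvs j) (hvs i) hrq hr
      rw [← hp, SimpleGraph.Walk.length_cons]
      have hle : Tw.dist (vs i) x ≤ q.length := by
        rw [← hji]; exact SimpleGraph.dist_le q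
      omega
  have hsepTwS : ∀ m x, m ∈ M → x ∉ M → Tw.dist m x = Tw.dist m w + Tw.dist w x :=
    fun m x hm hx => StmtAux.dist_split hTwconn
      (fun p => StmtAux.cross_mem_support hcrossTw p hm hx)
  have hsepTwMM : ∀ m m', m ∈ M → m' ∈ M → ¬ D.Reachable m m' →
      Tw.dist m m' = Tw.dist m w + Tw.dist w m' := by
    intro m m' hm hm' hr
    refine StmtAux.dist_split hTwconn ?_
    intro p
    by_contra hwp
    exact hr ⟨p.transfer D (hedgeD_of_Tw_M p (hstayTw p hm hwp))⟩
  have hLS : ∀ x y : V, x ∉ M → y ∉ M → T.dist x y = Tw.dist x y := by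
    intro x y hx hy
    refine le_antisymm ?_ ?_
    · obtain ⟨p, hp⟩ := hTwconn.exists_walk_length_eq_dist x y
      have hpath := p.isPath_of_length_eq_dist hp
      have hav : ∀ c ∈ p.support, c ∉ M := by
        intro m hm hmM
        have h1 : w ∈ (p.takeUntil m hm).support := by
          have := StmtAux.cross_mem_support hcrossTw (p.takeUntil m hm).reverse hmM hx
          rwa [SimpleGraph.Walk.support_reverse, List.mem_reverse] at this
        have h2 : w ∈ (p.dropUntil m hm).support :=
          StmtAux.cross_mem_support hcrossTw (p.dropUntil m hm) hmM hy
        exact StmtAux.double_cross hpath hm (fun h => hwM (by rw [h]; exact hmM)) h1 h2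
      calc T.dist x y ≤ (p.transfer T (hedgeT_of_Tw_nM p hav)).length := SimpleGraph.dist_le _
        _ = p.length := SimpleGraph.Walk.length_transfer _ _
        _ = Tw.dist x y := hp
    · obtain ⟨p, hp⟩ := hTconn.exists_walk_length_eq_dist x y
      have hpath := p.isPath_of_length_eq_dist hp
      have hav : ∀ c ∈ p.support, c ∉ M := by
        intro m hm hmM
        have h1 : v ∈ (p.takeUntil m hm).support := by
          have := StmtAux.cross_mem_support hcrossT (p.takeUntil m hm).reverse hmM hx
          rwa [SimpleGraph.Walk.support_reverse, List.mem_reverse] at this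
        have h2 : v ∈ (p.dropUntil m hm).support :=
          StmtAux.cross_mem_support hcrossT (p.dropUntil m hm) hmM hy
        exact StmtAux.double_cross hpath hm (fun h => hvM (by rw [h]; exact hmM)) h1 h2
      calc Tw.dist x y ≤ (p.transfer Tw (hedgeTw_of_T_nM p hav)).length := SimpleGraph.dist_le _
        _ = p.length := SimpleGraph.Walk.length_transfer _ _
        _ = T.dist x y := hp
  have hLD : ∀ x y : V, x ∈ M → D.Reachable x y → T.dist x y = Tw.dist x y := by
    intro x y hx hr
    have hyM : y ∈ M := hMcl hx hr
    have hxv : x ≠ v := fun h => hvM (h ▸ hx)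
    have hyv : y ≠ v := fun h => hvM (h ▸ hyM)
    have hxw : x ≠ w := fun h => hwM (h ▸ hx)
    have hyw : y ≠ w := fun h => hwM (h ▸ hyM)
    obtain ⟨i, hi⟩ := (hMmem x).mp hx
    refine le_antisymm ?_ ?_
    · -- T.dist ≤ Tw.dist : a shortest Tw-path avoids w, hence stays in M
      obtain ⟨p, hp⟩ := hTwconn.exists_walk_length_eq_dist x y
      have hpath := p.isPath_of_length_eq_dist hp
      have hwp : w ∉ p.support := by
        intro hwp
        have ht1 := hpath.takeUntil hwp
        have ht2 := hpath.dropUntil hwp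
        obtain ⟨a, hwa, q, hq⟩ :=
          SimpleGraph.Walk.exists_eq_cons_of_ne hxw.symm (p.takeUntil w hwp).reverse
        obtain ⟨b, hwb, q', hq'⟩ :=
          SimpleGraph.Walk.exists_eq_cons_of_ne hyw.symm (p.dropUntil w hwp)
        have hqp : q.IsPath ∧ w ∉ q.support := by
          have h' := ht1.reverse
          rw [hq, SimpleGraph.Walk.cons_isPath_iff] at h'
          exact ⟨h'.1, h'.2⟩
        have haM : a ∈ M := hstayTw q.reverse hx
          (by rw [SimpleGraph.Walk.support_reverse, List.mem_reverse]; exact hqp.2) a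
          (SimpleGraph.Walk.end_mem_support _)
        obtain ⟨j, rfl⟩ := hTwadj_wM a hwa haM
        have hrq : D.Reachable (vs j) x :=
          ⟨q.transfer D (hedgeD_of_Tw_M q (hstayTw q haM hqp.2))⟩
        have hji : vs j = vs i := hgate (hvs j) (hvs i) hrq hi
        have hq'p : q'.IsPath ∧ w ∉ q'.support := by
          rw [hq', SimpleGraph.Walk.cons_isPath_iff] at ht2
          exact ⟨ht2.1, ht2.2⟩
        have hbM : b ∈ M := hstayTw q'.reverse hyM
          (by rw [SimpleGraph.Walk.support_reverse, List.mem_reverse]; exact hq'p.2) b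
          (SimpleGraph.Walk.end_mem_support _)
        obtain ⟨k, rfl⟩ := hTwadj_wM b hwb hbM
        have hrq' : D.Reachable (vs k) y :=
          ⟨q'.transfer D (hedgeD_of_Tw_M q' (hstayTw q' hbM hq'p.2))⟩
        have hki : vs k = vs i := hgate (hvs k) (hvs i) hrq' (hi.trans hr)
        have he1 : s(w, vs i) ∈ (p.takeUntil w hwp).edges := by
          have h' : s(w, vs j) ∈ (p.takeUntil w hwp).reverse.edges := by
            rw [hq]; simp [SimpleGraph.Walk.edges_cons]
          rw [SimpleGraph.Walk.edges_reverse, List.mem_reverse] at h'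
          rwa [hji] at h'
        have he2 : s(w, vs i) ∈ (p.dropUntil w hwp).edges := by
          have h' : s(w, vs k) ∈ (p.dropUntil w hwp).edges := by
            rw [hq']; simp [SimpleGraph.Walk.edges_cons]
          rwa [hki] at h'
        have hed : p.edges = (p.takeUntil w hwp).edges ++ (p.dropUntil w hwp).edges := by
          conv_lhs => rw [← p.take_spec hwp]
          rw [SimpleGraph.Walk.edges_append]
        have hnd := hpath.isTrail.edges_nodup
        rw [hed, List.nodup_append] at hnd
        exact hnd.2.2 _ he1 _ he2 rfl
      have hsup : ∀ c ∈ p.support, c ∈ M := hstayTw p hx hwp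
      calc T.dist x y ≤ (p.transfer T
            (fun e he => SimpleGraph.edgeSet_mono hDleT (hedgeD_of_Tw_M p hsup e he))).length :=
            SimpleGraph.dist_le _
        _ = p.length := SimpleGraph.Walk.length_transfer _ _
        _ = Tw.dist x y := hp
    · -- Tw.dist ≤ T.dist : a shortest T-path avoids v
      obtain ⟨p, hp⟩ := hTconn.exists_walk_length_eq_dist x y
      have hpath := p.isPath_of_length_eq_dist hp
      have hvp : v ∉ p.support := by
        intro hvp
        have ht1 := hpath.takeUntil hvp
        have ht2 := hpath.dropUntil hvp
        obtain ⟨a, hva, q, hq⟩ :=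
          SimpleGraph.Walk.exists_eq_cons_of_ne hxv.symm (p.takeUntil v hvp).reverse
        obtain ⟨b, hvb, q', hq'⟩ :=
          SimpleGraph.Walk.exists_eq_cons_of_ne hyv.symm (p.dropUntil v hvp)
        have hqp : q.IsPath ∧ v ∉ q.support := by
          have h' := ht1.reverse
          rw [hq, SimpleGraph.Walk.cons_isPath_iff] at h'
          exact ⟨h'.1, h'.2⟩
        have hrq : D.Reachable a x := ⟨q.transfer D (hedgeD_of_T q hqp.2)⟩
        have hai : a = vs i := hgate hva (hvs i) hrq hi
        have hq'p : q'.IsPath ∧ v ∉ q'.support := by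
          rw [hq', SimpleGraph.Walk.cons_isPath_iff] at ht2
          exact ⟨ht2.1, ht2.2⟩
        have hrq' : D.Reachable b y := ⟨q'.transfer D (hedgeD_of_T q' hq'p.2)⟩
        have hbi : b = vs i := hgate hvb (hvs i) hrq' (hi.trans hr)
        have he1 : s(v, vs i) ∈ (p.takeUntil v hvp).edges := by
          have h' : s(v, a) ∈ (p.takeUntil v hvp).reverse.edges := by
            rw [hq]; simp [SimpleGraph.Walk.edges_cons]
          rw [SimpleGraph.Walk.edges_reverse, List.mem_reverse] at h'
          rwa [hai] at h'
        have he2 : s(v, vs i) ∈ (p.dropUntil v hvp).edges := by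
          have h' : s(v, b) ∈ (p.dropUntil v hvp).edges := by
            rw [hq']; simp [SimpleGraph.Walk.edges_cons]
          rwa [hbi] at h'
        have hed : p.edges = (p.takeUntil v hvp).edges ++ (p.dropUntil v hvp).edges := by
          conv_lhs => rw [← p.take_spec hvp]
          rw [SimpleGraph.Walk.edges_append]
        have hnd := hpath.isTrail.edges_nodup
        rw [hed, List.nodup_append] at hnd
        exact hnd.2.2 _ he1 _ he2 rfl
      calc Tw.dist x y ≤ (p.transfer Tw (hedgeTw_of_T_avoidv p hvp)).length :=
            SimpleGraph.dist_le _
        _ = p.length := SimpleGraph.Walk.length_transfer _ _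
        _ = T.dist x y := hp
  have hcentral : ∀ m, m ∈ M → Tw.dist m w = T.dist m v := by
    intro m hm
    obtain ⟨i, hi⟩ := (hMmem m).mp hm
    calc Tw.dist m w = Tw.dist w m := SimpleGraph.dist_comm
      _ = 1 + Tw.dist (vs i) m := hdistw i m hi
      _ = 1 + T.dist (vs i) m := by rw [hLD (vs i) m (hvsM i) hi]
      _ = T.dist v m := (hdistvx (vs i) m (hvs i) hi).symm
      _ = T.dist m v := SimpleGraph.dist_comm
  have hMS : ∀ m x, m ∈ M → x ∉ M → Tw.dist m x = T.dist m v + T.dist w x := by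
    intro m x hm hx
    rw [hsepTwS m x hm hx, hcentral m hm, ← hLS w x hwM hx]
  have hMM : ∀ m m', m ∈ M → m' ∈ M → Tw.dist m m' = T.dist m m' := by
    intro m m' hm hm'
    by_cases hr : D.Reachable m m'
    · exact (hLD m m' hm hr).symm
    · have hmv : m ≠ v := fun h => hvM (h ▸ hm)
      have hm'v : m' ≠ v := fun h => hvM (h ▸ hm')
      rw [hsepTwMM m m' hm hm' hr, hcentral m hm, hsepT m m' hmv hm'v hr]
      congr 1
      calc Tw.dist w m' = Tw.dist m' w := SimpleGraph.dist_comm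
        _ = T.dist m' v := hcentral m' hm'
        _ = T.dist v m' := SimpleGraph.dist_comm
  have hsigP : ∀ x, x ∈ P → T.dist w x = 1 + T.dist v x := by
    intro x hxP
    have hnr : ¬ D.Reachable w x := fun h => hPQ' x hxP ((hQmem x).mpr h)
    have hxv : x ≠ v := fun h => hvP (h ▸ hxP)
    rw [hsepT w x hw.ne' hxv hnr, SimpleGraph.dist_eq_one_iff_adj.mpr hw.symm]
  have hsigQ : ∀ x, x ∈ Q → T.dist v x = 1 + T.dist w x :=
    fun x hx => hdistvx w x hw ((hQmem x).mp hx)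
  have key1 : ∀ x y, x ∈ M → y ∉ M →
      (Tw.dist x y : ℚ) - (T.dist x y : ℚ) = (if y ∈ Q then (-1 : ℚ) else 1) := by
    intro x y hx hy
    have hxv : x ≠ v := fun h => hvM (h ▸ hx)
    by_cases hyQ : y ∈ Q
    · have hyv : y ≠ v := fun h => hvQ (h ▸ hyQ)
      have h1 : T.dist x y = Tw.dist x y + 1 := by
        rw [hMS x y hx hy, hsepT x y hxv hyv (fun h => hy (hMcl hx h)), hsigQ y hyQ]
        ring
      rw [if_pos hyQ, h1]
      push_cast
      ring
    · rw [if_neg hyQ]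
      by_cases hyv : y = v
      · have h1 : Tw.dist x y = T.dist x y + 1 := by
          rw [hMS x y hx hy, hyv, SimpleGraph.dist_eq_one_iff_adj.mpr hw.symm]
        rw [h1]
        push_cast
        ring
      · have hyP : y ∈ P := by
          rcases hpart y with h | h | h | h
          exacts [absurd h hyv, h, absurd h hyQ, absurd h hy]
        have h1 : Tw.dist x y = T.dist x y + 1 := by
          rw [hMS x y hx hy, hsigP y hyP, hsepT x y hxv hyv (fun h => hy (hMcl hx h))]
          ring
        rw [h1]
        push_cast
        ring
  have keyfull : ∀ x y : V, (Tw.dist x y : ℚ) - (T.dist x y : ℚ) =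
      (if x ∈ M then (if y ∈ M then 0 else (if y ∈ Q then (-1 : ℚ) else 1))
       else (if y ∈ M then (if x ∈ Q then (-1 : ℚ) else 1) else 0)) := by
    intro x y
    by_cases hx : x ∈ M
    · by_cases hy : y ∈ M
      · rw [if_pos hx, if_pos hy, hMM x y hx hy, sub_self]
      · rw [if_pos hx, if_neg hy]
        exact key1 x y hx hy
    · by_cases hy : y ∈ M
      · rw [if_neg hx, if_pos hy]
        calc (Tw.dist x y : ℚ) - (T.dist x y : ℚ)
            = (Tw.dist y x : ℚ) - (T.dist y x : ℚ) := by
              rw [show Tw.dist x y = Tw.dist y x from SimpleGraph.dist_comm,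
                show T.dist x y = T.dist y x from SimpleGraph.dist_comm]
          _ = _ := key1 y x hy hx
      · rw [if_neg hx, if_neg hy, hLS x y hx hy, sub_self]
  -- the summation
  have hwiener : wiener Tw - wiener T
      = (∑ x : V, ∑ y : V, ((Tw.dist x y : ℚ) - (T.dist x y : ℚ))) / 2 := by
    unfold wiener
    rw [div_sub_div_same]
    congr 1
    rw [← Finset.sum_sub_distrib]
    refine Finset.sum_congr rfl fun x _ => ?_
    rw [← Finset.sum_sub_distrib]
  have hncard : ∀ S : Set V, S.ncard = (Finset.univ.filter (· ∈ S)).card := by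
    intro S
    rw [Set.ncard_eq_toFinset_card' S, Set.filter_mem_univ_eq_toFinset]
  set Mf := Finset.univ.filter (· ∈ M) with hMf
  set Pf := Finset.univ.filter (· ∈ P) with hPf
  set Qf := Finset.univ.filter (· ∈ Q) with hQf
  set A : ℚ := (Pf.card : ℚ) + 1 - (Qf.card : ℚ) with hA
  have hfilter1 : (Finset.univ.filter (fun y => ¬ y ∈ M)).filter (fun y => y ∈ Q) = Qf := by
    ext y
    simp only [hQf, Finset.mem_filter, Finset.mem_univ, true_and]
    exact ⟨fun h => h.2, fun h => ⟨hQM y h, h⟩⟩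
  have hfilter2 : (Finset.univ.filter (fun y => ¬ y ∈ M)).filter (fun y => ¬ y ∈ Q)
      = insert v Pf := by
    ext y
    simp only [hPf, Finset.mem_filter, Finset.mem_univ, true_and, Finset.mem_insert]
    constructor
    · rintro ⟨h1, h2⟩
      rcases hpart y with h | h | h | h
      exacts [Or.inl h, Or.inr h, absurd h h2, absurd h h1]
    · rintro (rfl | h)
      · exact ⟨hvM, hvQ⟩
      · exact ⟨hPM y h, hPQ' y h⟩
  have hvPf : v ∉ Pf := by simp [hPf, hvP]
  have hSσ : ∑ y ∈ Finset.univ.filter (fun y => ¬ y ∈ M), (if y ∈ Q then (-1 : ℚ) else 1)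
      = A := by
    rw [Finset.sum_ite, hfilter1, hfilter2, Finset.sum_const, Finset.sum_const,
      Finset.card_insert_of_notMem hvPf, hA]
    simp only [nsmul_eq_mul]
    push_cast
    ring
  have hstep : ∀ x : V, ∑ y : V, ((Tw.dist x y : ℚ) - (T.dist x y : ℚ))
      = if x ∈ M then A else (Mf.card : ℚ) * (if x ∈ Q then (-1 : ℚ) else 1) := by
    intro x
    by_cases hx : x ∈ M
    · rw [if_pos hx]
      calc ∑ y : V, ((Tw.dist x y : ℚ) - (T.dist x y : ℚ))
          = ∑ y : V, (if y ∈ M then (0 : ℚ) else (if y ∈ Q then (-1 : ℚ) else 1)) :=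
            Finset.sum_congr rfl fun y _ => by rw [keyfull x y, if_pos hx]
        _ = ∑ y ∈ Finset.univ.filter (fun y => ¬ y ∈ M), (if y ∈ Q then (-1 : ℚ) else 1) := by
            rw [Finset.sum_filter]
            exact Finset.sum_congr rfl fun y _ => (ite_not _ _ _).symm
        _ = A := hSσ
    · rw [if_neg hx]
      calc ∑ y : V, ((Tw.dist x y : ℚ) - (T.dist x y : ℚ))
          = ∑ y : V, (if y ∈ M then (if x ∈ Q then (-1 : ℚ) else 1) else 0) :=
            Finset.sum_congr rfl fun y _ => by rw [keyfull x y, if_neg hx]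
        _ = ∑ y ∈ Mf, (if x ∈ Q then (-1 : ℚ) else 1) := by
            rw [hMf, Finset.sum_filter]
        _ = (Mf.card : ℚ) * (if x ∈ Q then (-1 : ℚ) else 1) := by
            rw [Finset.sum_const, nsmul_eq_mul]
  have htotal : ∑ x : V, ∑ y : V, ((Tw.dist x y : ℚ) - (T.dist x y : ℚ))
      = 2 * (Mf.card : ℚ) * A := by
    calc ∑ x : V, ∑ y : V, ((Tw.dist x y : ℚ) - (T.dist x y : ℚ))
        = ∑ x : V, (if x ∈ M then A else (Mf.card : ℚ) * (if x ∈ Q then (-1 : ℚ) else 1)) :=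
          Finset.sum_congr rfl fun x _ => hstep x
      _ = ∑ _x ∈ Mf, A
          + ∑ x ∈ Finset.univ.filter (fun x => ¬ x ∈ M),
              (Mf.card : ℚ) * (if x ∈ Q then (-1 : ℚ) else 1) := by
          rw [Finset.sum_ite, hMf]
      _ = (Mf.card : ℚ) * A + (Mf.card : ℚ) * A := by
          rw [Finset.sum_const, nsmul_eq_mul, ← Finset.mul_sum, hSσ]
      _ = 2 * (Mf.card : ℚ) * A := by ring
  have hMcard : (M.ncard : ℚ) = (Mf.card : ℚ) := by rw [hncard M, hMf]
  have hPcard : (P.ncard : ℚ) = (Pf.card : ℚ) := by rw [hncard P, hPf]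
  have hQcard : (Q.ncard : ℚ) = (Qf.card : ℚ) := by rw [hncard Q, hQf]
  constructor
  · rw [hwiener, htotal, hMcard, hPcard, hQcard, hA]
    ring
  · have hMpos : 0 < (M.ncard : ℚ) := by
      have : 0 < M.ncard := (Set.ncard_pos (Set.toFinite M)).mpr ⟨vs ⟨0, ht⟩, hvsM _⟩
      exact_mod_cast this
    have hle : (Q.ncard : ℚ) ≤ (P.ncard : ℚ) := by exact_mod_cast hPQ
    have : 0 < (P.ncard : ℚ) - (Q.ncard : ℚ) + 1 := by linarith
    exact mul_pos hMpos this
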